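/- Optimality condition: assuming ρ0(s) > 0 for all s, a policy π maximizes η over all policies if and only if the policy advantage A*_π := max_{π'} Σ_s ρ_π(s) Σ_a π'(a|s) A_π(s,a) equals 0. -/

import Mathlib

open scoped BigOperators

section MDPdefs

variable (S A : Type) [Fintype S] [Fintype A]

structure MDP where
  P : S → A → S → ℝ
  r : S → A → ℝ
  ρ0 : S → ℝ
  γ : ℝ

variable {S A}

def IsPolicy (π : S → A → ℝ) : Prop :=
  (∀ s a, 0 ≤ π s a) ∧ ∀ s, ∑ a, π s a = 1

def MDP.Valid (M : MDP S A) : Prop :=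
  (∀ s a s', 0 ≤ M.P s a s') ∧ (∀ s a, ∑ s', M.P s a s' = 1) ∧
  (∀ s, 0 ≤ M.ρ0 s) ∧ (∑ s, M.ρ0 s = 1) ∧ 0 < M.γ ∧ M.γ < 1

/-- Distribution of the state at time `t` when the initial state follows `ρ0`
and the trajectory follows policy `π`. -/
noncomputable def MDP.stateDist (M : MDP S A) (π : S → A → ℝ) : ℕ → S → ℝ
  | 0 => M.ρ0
  | (t+1) => fun s' => ∑ s, ∑ a, M.stateDist π t s * π s a * M.P s a s'

/-- The unnormalized discounted visitation frequency `ρ_π`. -/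
noncomputable def MDP.ρvisit (M : MDP S A) (π : S → A → ℝ) (s : S) : ℝ :=
  ∑' t : ℕ, M.γ ^ t * M.stateDist π t s

/-- The total expected discounted reward `η(π)`. -/
noncomputable def MDP.η (M : MDP S A) (π : S → A → ℝ) : ℝ :=
  ∑' t : ℕ, M.γ ^ t * ∑ s, M.stateDist π t s * ∑ a, π s a * M.r s a

/-- Distribution of the state at time `t` starting deterministically from `s0`. -/
noncomputable def MDP.distFrom [DecidableEq S] (M : MDP S A) (π : S → A → ℝ) (s0 : S) :
    ℕ → S → ℝ
  | 0 => fun s => if s = s0 then 1 else 0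
  | (t+1) => fun s' => ∑ s, ∑ a, M.distFrom π s0 t s * π s a * M.P s a s'

/-- The state value function `V_π`. -/
noncomputable def MDP.V [DecidableEq S] (M : MDP S A) (π : S → A → ℝ) (s0 : S) : ℝ :=
  ∑' t : ℕ, M.γ ^ t * ∑ s, M.distFrom π s0 t s * ∑ a, π s a * M.r s a

/-- The action value function `Q_π`. -/
noncomputable def MDP.Q [DecidableEq S] (M : MDP S A) (π : S → A → ℝ) (s : S) (a : A) : ℝ :=
  M.r s a + M.γ * ∑ s', M.P s a s' * M.V π s'

/-- The advantage function `A_π`. -/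
noncomputable def MDP.Adv [DecidableEq S] (M : MDP S A) (π : S → A → ℝ) (s : S) (a : A) : ℝ :=
  M.Q π s a - M.V π s

end MDPdefs

section Aux
variable {S A : Type} [Fintype S] [Fintype A]

-- (previous lemmas assumed; re-stated as axioms here? no, just copy) 
lemma summable_geom_bdd {γ : ℝ} (h0 : 0 ≤ γ) (h1 : γ < 1) {f : ℕ → ℝ} {C : ℝ}
    (hf : ∀ t, |f t| ≤ C) : Summable (fun t => γ ^ t * f t) := by
  apply Summable.of_abs
  apply Summable.of_nonneg_of_le (fun t => abs_nonneg _) (fun t => ?_)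
    ((summable_geometric_of_lt_one h0 h1).mul_right C)
  rw [abs_mul, abs_pow, abs_of_nonneg h0]
  exact mul_le_mul_of_nonneg_left (hf t) (pow_nonneg h0 t)

lemma abs_avg_le {d w : S → ℝ} {W : ℝ} (hd : ∀ s, 0 ≤ d s) (hsum : ∑ s, d s = 1)
    (hw : ∀ s, |w s| ≤ W) : |∑ s, d s * w s| ≤ W := by
  calc |∑ s, d s * w s| ≤ ∑ s, |d s * w s| := Finset.abs_sum_le_sum_abs _ _
    _ ≤ ∑ s, d s * W := by
        apply Finset.sum_le_sum; intro s _
        rw [abs_mul, abs_of_nonneg (hd s)]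
        exact mul_le_mul_of_nonneg_left (hw s) (hd s)
    _ = W := by rw [← Finset.sum_mul, hsum, one_mul]

variable {M : MDP S A} {π : S → A → ℝ}

lemma step_prop (hM : M.Valid) (hπ : IsPolicy π) {d : S → ℝ}
    (hd : ∀ s, 0 ≤ d s) (hsum : ∑ s, d s = 1) :
    (∀ s', 0 ≤ ∑ s, ∑ a, d s * π s a * M.P s a s') ∧
      (∑ s', ∑ s, ∑ a, d s * π s a * M.P s a s') = 1 := by
  constructor
  · intro s'
    apply Finset.sum_nonneg; intro s _
    apply Finset.sum_nonneg; intro a _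
    exact mul_nonneg (mul_nonneg (hd s) (hπ.1 s a)) (hM.1 s a s')
  · rw [Finset.sum_comm]
    have h1 : ∀ s, (∑ s', ∑ a, d s * π s a * M.P s a s') = d s := by
      intro s
      rw [Finset.sum_comm]
      calc ∑ a, ∑ s', d s * π s a * M.P s a s'
          = ∑ a, d s * π s a := by
            apply Finset.sum_congr rfl; intro a _
            rw [← Finset.mul_sum, hM.2.1 s a, mul_one]
        _ = d s := by
            simp_rw [mul_comm (d s), ← Finset.sum_mul, hπ.2 s, one_mul]
    simp_rw [h1]; exact hsum

lemma stateDist_prop (hM : M.Valid) (hπ : IsPolicy π) (t : ℕ) :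
    (∀ s, 0 ≤ M.stateDist π t s) ∧ (∑ s, M.stateDist π t s = 1) := by
  induction t with
  | zero => exact ⟨hM.2.2.1, hM.2.2.2.1⟩
  | succ t ih =>
    have := step_prop hM hπ ih.1 ih.2
    exact ⟨fun s => this.1 s, this.2⟩

lemma distFrom_prop [DecidableEq S] (hM : M.Valid) (hπ : IsPolicy π) (s0 : S) (t : ℕ) :
    (∀ s, 0 ≤ M.distFrom π s0 t s) ∧ (∑ s, M.distFrom π s0 t s = 1) := by
  induction t with
  | zero =>
    constructor
    · intro s; simp [MDP.distFrom]; split <;> norm_num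
    · simp [MDP.distFrom]
  | succ t ih =>
    have := step_prop hM hπ ih.1 ih.2
    exact ⟨fun s => this.1 s, this.2⟩

-- reward bound
noncomputable def MDP.Rb (M : MDP S A) : ℝ := ∑ s, ∑ a, |M.r s a|

lemma Rb_nonneg : 0 ≤ M.Rb := by
  apply Finset.sum_nonneg; intro s _; apply Finset.sum_nonneg; intro a _; exact abs_nonneg _

lemma abs_r_le (s : S) (a : A) : |M.r s a| ≤ M.Rb := by
  have h1 : |M.r s a| ≤ ∑ a, |M.r s a| :=
    Finset.single_le_sum (f := fun a => |M.r s a|) (fun a _ => abs_nonneg _) (Finset.mem_univ a)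
  refine h1.trans ?_
  exact Finset.single_le_sum (f := fun s => ∑ a, |M.r s a|)
    (fun s _ => Finset.sum_nonneg fun a _ => abs_nonneg _) (Finset.mem_univ s)

lemma abs_w_le (hπ : IsPolicy π) (s : S) : |∑ a, π s a * M.r s a| ≤ M.Rb :=
  abs_avg_le (hπ.1 s) (hπ.2 s) (fun a => abs_r_le s a)

lemma abs_g_le [DecidableEq S] (hM : M.Valid) (hπ : IsPolicy π) (s0 : S) (t : ℕ) :
    |∑ s, M.distFrom π s0 t s * ∑ a, π s a * M.r s a| ≤ M.Rb :=
  abs_avg_le (distFrom_prop hM hπ s0 t).1 (distFrom_prop hM hπ s0 t).2 (abs_w_le hπ)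

lemma summable_V [DecidableEq S] (hM : M.Valid) (hπ : IsPolicy π) (s0 : S) :
    Summable (fun t => M.γ ^ t * ∑ s, M.distFrom π s0 t s * ∑ a, π s a * M.r s a) :=
  summable_geom_bdd hM.2.2.2.2.1.le hM.2.2.2.2.2 (abs_g_le hM hπ s0)

lemma tsum_abs_le_of_bdd {γ C : ℝ} (h0 : 0 < γ) (h1 : γ < 1) {f : ℕ → ℝ}
    (hf : ∀ t, |f t| ≤ C) : |∑' t : ℕ, γ ^ t * f t| ≤ C / (1 - γ) := by
  have hs : Summable (fun t => γ ^ t * f t) := summable_geom_bdd h0.le h1 hf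
  have hsa : Summable (fun t => |γ ^ t * f t|) := hs.abs
  have h2 : |∑' t : ℕ, γ ^ t * f t| ≤ ∑' t : ℕ, |γ ^ t * f t| := by
    have := norm_tsum_le_tsum_norm (f := fun t => γ ^ t * f t)
      (by simpa only [Real.norm_eq_abs] using hsa)
    simpa only [Real.norm_eq_abs] using this
  refine h2.trans ?_
  have h3 : ∑' t : ℕ, |γ ^ t * f t| ≤ ∑' t : ℕ, γ ^ t * C := by
    apply Summable.tsum_le_tsum _ hsa ((summable_geometric_of_lt_one h0.le h1).mul_right C)
    intro t
    rw [abs_mul, abs_pow, abs_of_nonneg h0.le]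
    exact mul_le_mul_of_nonneg_left (hf t) (pow_nonneg h0.le t)
  refine h3.trans_eq ?_
  rw [tsum_mul_right, tsum_geometric_of_lt_one h0.le h1, div_eq_mul_inv, mul_comm]

lemma abs_V_le [DecidableEq S] (hM : M.Valid) (hπ : IsPolicy π) (s0 : S) :
    |M.V π s0| ≤ M.Rb / (1 - M.γ) :=
  tsum_abs_le_of_bdd hM.2.2.2.2.1 hM.2.2.2.2.2 (abs_g_le hM hπ s0)


lemma step_avg (d g : S → ℝ) :
    ∑ s, (∑ s'', ∑ a, d s'' * π s'' a * M.P s'' a s) * g s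
      = ∑ s'', d s'' * ∑ a, π s'' a * ∑ s, M.P s'' a s * g s := by
  simp_rw [Finset.sum_mul, Finset.mul_sum]
  rw [Finset.sum_comm]
  apply Finset.sum_congr rfl; intro s'' _
  rw [Finset.sum_comm]
  apply Finset.sum_congr rfl; intro a _
  apply Finset.sum_congr rfl; intro s _
  ring

lemma distFrom_succ_avg [DecidableEq S] (t : ℕ) (s0 : S) (g : S → ℝ) :
    ∑ s, M.distFrom π s0 (t+1) s * g s
      = ∑ a, π s0 a * ∑ s1, M.P s0 a s1 * ∑ s, M.distFrom π s1 t s * g s := by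
  induction t generalizing g with
  | zero =>
    have h0 : ∀ s1 : S, (∑ s, M.distFrom π s1 0 s * g s) = g s1 := by
      intro s1
      show (∑ s, (if s = s1 then (1:ℝ) else 0) * g s) = g s1
      rw [Finset.sum_eq_single s1]
      · simp
      · intro b _ hb; simp [hb]
      · intro h; exact (h (Finset.mem_univ s1)).elim
    simp_rw [h0]
    have : ∑ s, M.distFrom π s0 1 s * g s
        = ∑ s, (∑ s'', ∑ a, M.distFrom π s0 0 s'' * π s'' a * M.P s'' a s) * g s := rfl
    rw [this, step_avg]
    rw [Finset.sum_eq_single s0]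
    · show (if s0 = s0 then (1:ℝ) else 0) * _ = _
      simp
    · intro b _ hb
      show (if b = s0 then (1:ℝ) else 0) * _ = 0
      simp [hb]
    · intro h; exact (h (Finset.mem_univ s0)).elim
  | succ t ih =>
    have hstep : ∀ (u : ℕ) (s1 : S), ∑ s, M.distFrom π s1 (u+1) s * g s
        = ∑ s'', M.distFrom π s1 u s'' * ∑ a, π s'' a * ∑ s, M.P s'' a s * g s := by
      intro u s1
      have : ∑ s, M.distFrom π s1 (u+1) s * g s
          = ∑ s, (∑ s'', ∑ a, M.distFrom π s1 u s'' * π s'' a * M.P s'' a s) * g s := rfl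
      rw [this, step_avg]
    rw [hstep (t+1) s0, ih]
    apply Finset.sum_congr rfl; intro a _
    congr 1
    apply Finset.sum_congr rfl; intro s1 _
    rw [hstep t s1]


lemma V_eq [DecidableEq S] (hM : M.Valid) (hπ : IsPolicy π) (s0 : S) :
    M.V π s0 = ∑ a, π s0 a * M.Q π s0 a := by
  have hsum : ∀ s1 : S, Summable
      (fun t => M.γ ^ t * ∑ s, M.distFrom π s1 t s * ∑ a, π s a * M.r s a) :=
    fun s1 => summable_V hM hπ s1
  have hV : ∀ s1, M.V π s1
      = ∑' t : ℕ, M.γ ^ t * ∑ s, M.distFrom π s1 t s * ∑ a, π s a * M.r s a := fun _ => rfl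
  have h0 : (∑ s, M.distFrom π s0 0 s * ∑ a, π s a * M.r s a) = ∑ a, π s0 a * M.r s0 a := by
    show (∑ s, (if s = s0 then (1:ℝ) else 0) * _) = _
    rw [Finset.sum_eq_single s0]
    · simp
    · intro b _ hb; simp [hb]
    · intro h; exact (h (Finset.mem_univ s0)).elim
  have hrec : ∀ t : ℕ, M.γ ^ (t+1) * ∑ s, M.distFrom π s0 (t+1) s * ∑ a, π s a * M.r s a
      = ∑ a, ∑ s1, π s0 a * (M.P s0 a s1 *
          (M.γ * (M.γ ^ t * ∑ s, M.distFrom π s1 t s * ∑ a, π s a * M.r s a))) := by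
    intro t
    rw [distFrom_succ_avg, Finset.mul_sum]
    apply Finset.sum_congr rfl; intro a _
    rw [Finset.mul_sum, Finset.mul_sum]
    apply Finset.sum_congr rfl; intro s1 _
    ring
  rw [hV s0, Summable.tsum_eq_zero_add (hsum s0)]
  simp only [pow_zero, one_mul, h0]
  simp_rw [hrec]
  have hs1 : ∀ a : A, Summable (fun t : ℕ => ∑ s1, π s0 a * (M.P s0 a s1 *
      (M.γ * (M.γ ^ t * ∑ s, M.distFrom π s1 t s * ∑ a, π s a * M.r s a)))) := by
    intro a
    apply summable_sum; intro s1 _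
    exact (((hsum s1).mul_left M.γ).mul_left (M.P s0 a s1)).mul_left (π s0 a)
  rw [Summable.tsum_finsetSum (fun a _ => hs1 a)]
  have : ∀ a : A, (∑' t : ℕ, ∑ s1, π s0 a * (M.P s0 a s1 *
          (M.γ * (M.γ ^ t * ∑ s, M.distFrom π s1 t s * ∑ a, π s a * M.r s a))))
      = ∑ s1, π s0 a * (M.P s0 a s1 * (M.γ * M.V π s1)) := by
    intro a
    rw [Summable.tsum_finsetSum (fun s1 _ =>
      (((hsum s1).mul_left M.γ).mul_left (M.P s0 a s1)).mul_left (π s0 a))]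
    apply Finset.sum_congr rfl; intro s1 _
    rw [tsum_mul_left, tsum_mul_left, tsum_mul_left, ← hV s1]
  rw [Finset.sum_congr rfl (fun a _ => this a)]
  simp_rw [MDP.Q, mul_add, Finset.sum_add_distrib]
  congr 1
  apply Finset.sum_congr rfl; intro a _
  rw [Finset.mul_sum, Finset.mul_sum]
  apply Finset.sum_congr rfl; intro s1 _
  ring

lemma sum_pi_adv_zero [DecidableEq S] (hM : M.Valid) (hπ : IsPolicy π) (s : S) :
    ∑ a, π s a * M.Adv π s a = 0 := by
  simp_rw [MDP.Adv, mul_sub, Finset.sum_sub_distrib, ← V_eq hM hπ s,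
    ← Finset.sum_mul, hπ.2 s, one_mul, sub_self]

lemma stateDist_eq [DecidableEq S] (t : ℕ) (s : S) :
    M.stateDist π t s = ∑ s0, M.ρ0 s0 * M.distFrom π s0 t s := by
  induction t generalizing s with
  | zero =>
    show M.ρ0 s = ∑ s0, M.ρ0 s0 * (if s = s0 then (1:ℝ) else 0)
    rw [Finset.sum_eq_single s]
    · simp
    · intro b _ hb; simp [Ne.symm hb]
    · intro h; exact (h (Finset.mem_univ s)).elim
  | succ t ih =>
    show (∑ s'', ∑ a, M.stateDist π t s'' * π s'' a * M.P s'' a s)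
        = ∑ s0, M.ρ0 s0 * ∑ s'', ∑ a, M.distFrom π s0 t s'' * π s'' a * M.P s'' a s
    calc ∑ s'', ∑ a, M.stateDist π t s'' * π s'' a * M.P s'' a s
        = ∑ s'', ∑ a, ∑ s0, M.ρ0 s0 * M.distFrom π s0 t s'' * π s'' a * M.P s'' a s := by
          apply Finset.sum_congr rfl; intro s'' _
          apply Finset.sum_congr rfl; intro a _
          rw [ih, Finset.sum_mul, Finset.sum_mul]
      _ = ∑ s'', ∑ s0, ∑ a, M.ρ0 s0 * M.distFrom π s0 t s'' * π s'' a * M.P s'' a s := by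
          apply Finset.sum_congr rfl; intro s'' _
          exact Finset.sum_comm
      _ = ∑ s0, ∑ s'', ∑ a, M.ρ0 s0 * M.distFrom π s0 t s'' * π s'' a * M.P s'' a s :=
          Finset.sum_comm
      _ = ∑ s0, M.ρ0 s0 * ∑ s'', ∑ a, M.distFrom π s0 t s'' * π s'' a * M.P s'' a s := by
          apply Finset.sum_congr rfl; intro s0 _
          rw [Finset.mul_sum]
          apply Finset.sum_congr rfl; intro s'' _
          rw [Finset.mul_sum]
          apply Finset.sum_congr rfl; intro a _
          ring

lemma η_eq [DecidableEq S] (hM : M.Valid) (hπ : IsPolicy π) :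
    M.η π = ∑ s0, M.ρ0 s0 * M.V π s0 := by
  have hsum : ∀ s1 : S, Summable
      (fun t => M.γ ^ t * ∑ s, M.distFrom π s1 t s * ∑ a, π s a * M.r s a) :=
    fun s1 => summable_V hM hπ s1
  have key : ∀ t : ℕ, M.γ ^ t * ∑ s, M.stateDist π t s * ∑ a, π s a * M.r s a
      = ∑ s0, M.ρ0 s0 * (M.γ ^ t * ∑ s, M.distFrom π s0 t s * ∑ a, π s a * M.r s a) := by
    intro t
    simp_rw [stateDist_eq, Finset.sum_mul, Finset.mul_sum]
    rw [Finset.sum_comm]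
    apply Finset.sum_congr rfl; intro s0 _
    apply Finset.sum_congr rfl; intro s _
    apply Finset.sum_congr rfl; intro a _
    ring
  rw [MDP.η]
  simp_rw [key]
  rw [Summable.tsum_finsetSum (fun s0 _ => (hsum s0).mul_left (M.ρ0 s0))]
  apply Finset.sum_congr rfl; intro s0 _
  rw [tsum_mul_left]
  rfl


open Filter in
lemma tele_tsum {γ C : ℝ} (h0 : 0 < γ) (h1 : γ < 1) {c : ℕ → ℝ} (hb : ∀ t, |c t| ≤ C) :
    ∑' t : ℕ, (γ ^ (t+1) * c (t+1) - γ ^ t * c t) = - c 0 := by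
  have hfe : (fun t : ℕ => γ ^ (t+1) * c (t+1) - γ ^ t * c t)
      = fun t => γ ^ t * (γ * c (t+1) - c t) := by
    funext t; ring
  have hsum : Summable (fun t : ℕ => γ ^ (t+1) * c (t+1) - γ ^ t * c t) := by
    rw [hfe]
    apply summable_geom_bdd h0.le h1 (C := γ * C + C)
    intro t
    calc |γ * c (t+1) - c t| ≤ |γ * c (t+1)| + |c t| := by
          have := abs_add_le (γ * c (t+1)) (-(c t))
          simpa [sub_eq_add_neg] using this
      _ ≤ γ * C + C := by
          apply add_le_add _ (hb t)
          rw [abs_mul, abs_of_nonneg h0.le]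
          exact mul_le_mul_of_nonneg_left (hb (t+1)) h0.le
  have hten : Tendsto (fun n : ℕ => γ ^ n * c n) atTop (nhds 0) := by
    apply squeeze_zero_norm (a := fun n : ℕ => C * γ ^ n)
    · intro n
      rw [Real.norm_eq_abs, abs_mul, abs_pow, abs_of_nonneg h0.le, mul_comm]
      exact mul_le_mul_of_nonneg_right (hb n) (pow_nonneg h0.le n)
    · simpa using (tendsto_pow_atTop_nhds_zero_of_lt_one h0.le h1).const_mul C
  have hhs : HasSum (fun t : ℕ => γ ^ (t+1) * c (t+1) - γ ^ t * c t) (- c 0) := by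
    rw [hsum.hasSum_iff_tendsto_nat]
    have heq : ∀ n : ℕ, (∑ i ∈ Finset.range n, (γ ^ (i+1) * c (i+1) - γ ^ i * c i))
        = γ ^ n * c n - c 0 := by
      intro n
      rw [Finset.sum_range_sub (fun i => γ ^ i * c i)]
      simp
    simp_rw [heq]
    simpa using hten.sub_const (c 0)
  exact hhs.tsum_eq

lemma dist_le_one {d : S → ℝ} (hd : ∀ s, 0 ≤ d s) (hsum : ∑ s, d s = 1) (s : S) :
    d s ≤ 1 := by
  rw [← hsum]
  exact Finset.single_le_sum (f := d) (fun s _ => hd s) (Finset.mem_univ s)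

lemma summable_ρvisit (hM : M.Valid) (hπ : IsPolicy π) (s : S) :
    Summable (fun t : ℕ => M.γ ^ t * M.stateDist π t s) := by
  apply summable_geom_bdd hM.2.2.2.2.1.le hM.2.2.2.2.2 (C := 1)
  intro t
  rw [abs_of_nonneg ((stateDist_prop hM hπ t).1 s)]
  exact dist_le_one (stateDist_prop hM hπ t).1 (stateDist_prop hM hπ t).2 s

lemma ρvisit_nonneg (hM : M.Valid) (hπ : IsPolicy π) (s : S) : 0 ≤ M.ρvisit π s :=
  tsum_nonneg fun t => mul_nonneg (pow_nonneg hM.2.2.2.2.1.le t) ((stateDist_prop hM hπ t).1 s)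

lemma ρ0_le_ρvisit (hM : M.Valid) (hπ : IsPolicy π) (s : S) : M.ρ0 s ≤ M.ρvisit π s := by
  have h := Summable.le_tsum (summable_ρvisit hM hπ s) 0
    (fun j _ => mul_nonneg (pow_nonneg hM.2.2.2.2.1.le j) ((stateDist_prop hM hπ j).1 s))
  simpa [MDP.stateDist, MDP.ρvisit] using h

lemma pdl [DecidableEq S] (hM : M.Valid) (hπ : IsPolicy π) {π' : S → A → ℝ}
    (hπ' : IsPolicy π') :
    (∑ s, M.ρvisit π' s * ∑ a, π' s a * M.Adv π s a) = M.η π' - M.η π := by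
  have hγ0 := hM.2.2.2.2.1
  have hγ1 := hM.2.2.2.2.2
  set G : S → ℝ := fun s => ∑ a, π' s a * M.Adv π s a with hG
  set c : ℕ → ℝ := fun t => ∑ s, M.stateDist π' t s * M.V π s with hc
  -- per-state expansion of G
  have hGs : ∀ s, G s = (∑ a, π' s a * M.r s a)
      + M.γ * (∑ a, π' s a * ∑ s', M.P s a s' * M.V π s') - M.V π s := by
    intro s
    rw [hG]
    simp only [MDP.Adv, MDP.Q]
    calc ∑ a, π' s a * (M.r s a + M.γ * ∑ s', M.P s a s' * M.V π s' - M.V π s)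
        = ∑ a, (π' s a * M.r s a + M.γ * (π' s a * ∑ s', M.P s a s' * M.V π s')
            - π' s a * M.V π s) := by
          apply Finset.sum_congr rfl; intro a _; ring
      _ = _ := by
          rw [Finset.sum_sub_distrib, Finset.sum_add_distrib, ← Finset.mul_sum,
            ← Finset.sum_mul, hπ'.2 s, one_mul]
  -- middle term equals c (t+1)
  have hmid : ∀ t : ℕ, (∑ s, M.stateDist π' t s * ∑ a, π' s a * ∑ s', M.P s a s' * M.V π s')
      = c (t+1) := by
    intro t
    have h2 : c (t+1)
        = ∑ s, (∑ s'', ∑ a, M.stateDist π' t s'' * π' s'' a * M.P s'' a s) * M.V π s := rfl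
    rw [h2, step_avg]
  have key : ∀ t : ℕ, M.γ ^ t * (∑ s, M.stateDist π' t s * G s)
      = M.γ ^ t * (∑ s, M.stateDist π' t s * ∑ a, π' s a * M.r s a)
        + (M.γ ^ (t+1) * c (t+1) - M.γ ^ t * c t) := by
    intro t
    have : (∑ s, M.stateDist π' t s * G s)
        = (∑ s, M.stateDist π' t s * ∑ a, π' s a * M.r s a)
          + M.γ * c (t+1) - c t := by
      calc ∑ s, M.stateDist π' t s * G s
          = ∑ s, (M.stateDist π' t s * (∑ a, π' s a * M.r s a)
              + M.γ * (M.stateDist π' t s * ∑ a, π' s a * ∑ s', M.P s a s' * M.V π s')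
              - M.stateDist π' t s * M.V π s) := by
            apply Finset.sum_congr rfl; intro s _
            rw [hGs s]; ring
        _ = _ := by
            rw [Finset.sum_sub_distrib, Finset.sum_add_distrib, ← Finset.mul_sum, hmid t, hc]
    rw [this]; ring
  -- bounds
  have hds := fun t => stateDist_prop hM hπ' t
  have hVb := abs_V_le hM hπ
  have hcb : ∀ t, |c t| ≤ M.Rb / (1 - M.γ) := fun t => abs_avg_le (hds t).1 (hds t).2 hVb
  have hRsum : Summable (fun t : ℕ =>
      M.γ ^ t * ∑ s, M.stateDist π' t s * ∑ a, π' s a * M.r s a) :=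
    summable_geom_bdd hγ0.le hγ1 (fun t => abs_avg_le (hds t).1 (hds t).2 (abs_w_le hπ'))
  have htele_sum : Summable (fun t : ℕ => M.γ ^ (t+1) * c (t+1) - M.γ ^ t * c t) := by
    have hfe : (fun t : ℕ => M.γ ^ (t+1) * c (t+1) - M.γ ^ t * c t)
        = fun t => M.γ ^ t * (M.γ * c (t+1) - c t) := by funext t; ring
    rw [hfe]
    apply summable_geom_bdd hγ0.le hγ1
      (C := M.γ * (M.Rb / (1 - M.γ)) + M.Rb / (1 - M.γ))
    intro t
    calc |M.γ * c (t+1) - c t| ≤ |M.γ * c (t+1)| + |c t| := by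
          have := abs_add_le (M.γ * c (t+1)) (-(c t))
          simpa [sub_eq_add_neg] using this
      _ ≤ _ := by
          apply add_le_add _ (hcb t)
          rw [abs_mul, abs_of_nonneg hγ0.le]
          exact mul_le_mul_of_nonneg_left (hcb (t+1)) hγ0.le
  -- swap the finite sum and the tsum
  have hswap : (∑ s, M.ρvisit π' s * G s)
      = ∑' t : ℕ, M.γ ^ t * (∑ s, M.stateDist π' t s * G s) := by
    have h1 : ∀ s, M.ρvisit π' s * G s
        = ∑' t : ℕ, M.γ ^ t * (M.stateDist π' t s * G s) := by
      intro s
      rw [MDP.ρvisit, ← tsum_mul_right]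
      apply tsum_congr; intro t; ring
    simp_rw [h1]
    rw [← Summable.tsum_finsetSum (fun s _ => ?_)]
    · apply tsum_congr; intro t
      rw [Finset.mul_sum]
    · apply summable_geom_bdd hγ0.le hγ1 (C := |G s|)
      intro t
      rw [abs_mul, abs_of_nonneg ((hds t).1 s)]
      calc M.stateDist π' t s * |G s| ≤ 1 * |G s| :=
            mul_le_mul_of_nonneg_right (dist_le_one (hds t).1 (hds t).2 s) (abs_nonneg _)
        _ = |G s| := one_mul _
  rw [hswap]
  calc ∑' t : ℕ, M.γ ^ t * (∑ s, M.stateDist π' t s * G s)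
      = (∑' t : ℕ, M.γ ^ t * ∑ s, M.stateDist π' t s * ∑ a, π' s a * M.r s a)
        + ∑' t : ℕ, (M.γ ^ (t+1) * c (t+1) - M.γ ^ t * c t) := by
        simp_rw [key]
        rw [Summable.tsum_add hRsum htele_sum]
    _ = M.η π' + - c 0 := by
        rw [tele_tsum hγ0 hγ1 hcb, MDP.η]
    _ = M.η π' - M.η π := by
        have h0 : c 0 = M.η π := by
          rw [η_eq hM hπ]; rfl
        rw [h0]; ring

end Aux

/-- Optimality condition: assuming `ρ0(s) > 0` for all `s`, a policy `π`
maximizes `η` over all policies iff the policy advantage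
`A*_π = max_{π'} Σ_s ρ_π(s) Σ_a π'(a|s) A_π(s,a)` equals `0`. -/
theorem stmt4 {S A : Type} [Fintype S] [Fintype A] [DecidableEq S]
    (M : MDP S A) (hM : M.Valid) (hρ0 : ∀ s, 0 < M.ρ0 s)
    (π : S → A → ℝ) (hπ : IsPolicy π) :
    (∀ π', IsPolicy π' → M.η π' ≤ M.η π) ↔
      IsGreatest {x : ℝ | ∃ π', IsPolicy π' ∧
        x = ∑ s, M.ρvisit π s * ∑ a, π' s a * M.Adv π s a} 0 := by
  classical
  constructor
  · intro hmax
    constructor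
    · exact ⟨π, hπ, by simp_rw [sum_pi_adv_zero hM hπ, mul_zero, Finset.sum_const_zero]⟩
    · rintro x ⟨π', hπ', rfl⟩
      by_contra hpos
      push_neg at hpos
      -- some state has positive policy advantage
      obtain ⟨s₀, -, hs₀⟩ : ∃ s ∈ Finset.univ,
          (0:ℝ) < M.ρvisit π s * ∑ a, π' s a * M.Adv π s a := by
        by_contra hall
        push_neg at hall
        exact absurd (Finset.sum_nonpos (fun s hs => hall s hs)) (not_le.mpr hpos)
      have hG₀ : 0 < ∑ a, π' s₀ a * M.Adv π s₀ a := by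
        by_contra hle
        push_neg at hle
        exact absurd (mul_nonpos_of_nonneg_of_nonpos (ρvisit_nonneg hM hπ s₀) hle)
          (not_le.mpr hs₀)
      -- improved policy
      set π'' : S → A → ℝ :=
        fun s => if 0 < ∑ a, π' s a * M.Adv π s a then π' s else π s with hπ''def
      have hπ'' : IsPolicy π'' := by
        constructor
        · intro s a
          rw [hπ''def]; dsimp only
          split
          · exact hπ'.1 s a
          · exact hπ.1 s a
        · intro s
          rw [hπ''def]; dsimp only
          split
          · exact hπ'.2 s
          · exact hπ.2 s
      have hkey : ∀ s, 0 ≤ ∑ a, π'' s a * M.Adv π s a := by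
        intro s
        rw [hπ''def]; dsimp only
        split
        · next h => exact h.le
        · rw [sum_pi_adv_zero hM hπ s]
      have hkey₀ : 0 < ∑ a, π'' s₀ a * M.Adv π s₀ a := by
        rw [hπ''def]; dsimp only
        rw [if_pos hG₀]
        exact hG₀
      have hlt : 0 < M.η π'' - M.η π := by
        rw [← pdl hM hπ hπ'']
        apply Finset.sum_pos' (fun s _ => mul_nonneg (ρvisit_nonneg hM hπ'' s) (hkey s))
        exact ⟨s₀, Finset.mem_univ s₀,
          mul_pos (lt_of_lt_of_le (hρ0 s₀) (ρ0_le_ρvisit hM hπ'' s₀)) hkey₀⟩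
      exact absurd (hmax π'' hπ'') (not_le.mpr (by linarith))
  · rintro ⟨-, hub⟩ π' hπ'
    -- first: every advantage is nonpositive
    have hAdv : ∀ s a, M.Adv π s a ≤ 0 := by
      intro s₀ a₀
      set πd : S → A → ℝ :=
        Function.update π s₀ (fun a => if a = a₀ then 1 else 0) with hπd
      have hπdP : IsPolicy πd := by
        constructor
        · intro s a
          rw [hπd]
          by_cases h : s = s₀
          · subst h; rw [Function.update_self]; split <;> norm_num
          · rw [Function.update_of_ne h]; exact hπ.1 s a
        · intro s
          rw [hπd]
          by_cases h : s = s₀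
          · subst h; rw [Function.update_self]; simp
          · rw [Function.update_of_ne h]; exact hπ.2 s
      have hmem : (∑ s, M.ρvisit π s * ∑ a, πd s a * M.Adv π s a) ∈
          {x : ℝ | ∃ π', IsPolicy π' ∧
            x = ∑ s, M.ρvisit π s * ∑ a, π' s a * M.Adv π s a} := ⟨πd, hπdP, rfl⟩
      have hle := hub hmem
      have hval : (∑ s, M.ρvisit π s * ∑ a, πd s a * M.Adv π s a)
          = M.ρvisit π s₀ * M.Adv π s₀ a₀ := by
        rw [Finset.sum_eq_single s₀]
        · congr 1
          rw [hπd]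
          rw [Finset.sum_eq_single a₀]
          · rw [Function.update_self]; simp
          · intro b _ hb
            rw [Function.update_self]; simp [hb]
          · intro h; exact (h (Finset.mem_univ a₀)).elim
        · intro s _ hs
          rw [hπd]
          have : Function.update π s₀ (fun a => if a = a₀ then (1:ℝ) else 0) s = π s :=
            Function.update_of_ne hs _ _
          rw [this, sum_pi_adv_zero hM hπ s, mul_zero]
        · intro h; exact (h (Finset.mem_univ s₀)).elim
      rw [hval] at hle
      have hρ : 0 < M.ρvisit π s₀ := lt_of_lt_of_le (hρ0 s₀) (ρ0_le_ρvisit hM hπ s₀)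
      nlinarith
    have : M.η π' - M.η π ≤ 0 := by
      rw [← pdl hM hπ hπ']
      apply Finset.sum_nonpos
      intro s _
      apply mul_nonpos_of_nonneg_of_nonpos (ρvisit_nonneg hM hπ' s)
      apply Finset.sum_nonpos
      intro a _
      exact mul_nonpos_of_nonneg_of_nonpos (hπ'.1 s a) (hAdv s a)
    linarith
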